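/- For any integer n ≥ 4 with n ≡ 0 (mod 4), the equidistant dimension of the hypercube Q_n satisfies 2^{n-1} ≤ ξ(Q_n) ≤ 2^{n-1} + 2^{n/2 - 2}. -/

import Mathlib

open SimpleGraph

/-- A distance-equalizer set: any two vertices outside `D` are equidistant
from some vertex of `D`. -/
def IsDistEqSet {V : Type*} (G : SimpleGraph V) (D : Set V) : Prop :=
  ∀ x ∉ D, ∀ y ∉ D, ∃ w ∈ D, G.dist x w = G.dist y w

/-- The equidistant dimension: minimum cardinality of a distance-equalizer set. -/
noncomputable def eqdim {V : Type*} [Fintype V] (G : SimpleGraph V) : ℕ :=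
  sInf {k | ∃ D : Finset V, IsDistEqSet G (D : Set V) ∧ D.card = k}

/-- The hypercube graph on binary strings of length `n`: two strings are
adjacent iff they differ in exactly one coordinate. -/
def hypercube (n : ℕ) : SimpleGraph (Fin n → Bool) :=
  SimpleGraph.fromRel (fun v w => hammingDist v w = 1)

open Finset

section Infra
variable {n : ℕ}

lemma hamming_def (x y : Fin n → Bool) :
    hammingDist x y = (Finset.univ.filter fun i => x i ≠ y i).card := rfl

lemma hc_adj {x y : Fin n → Bool} : (hypercube n).Adj x y ↔ hammingDist x y = 1 := by
  constructor
  · rintro ⟨hne, h | h⟩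
    · exact h
    · rw [hammingDist_comm]; exact h
  · intro h
    refine ⟨fun he => by simp [he] at h, Or.inl h⟩

def flipS (S : Finset (Fin n)) (x : Fin n → Bool) : Fin n → Bool :=
  fun i => if i ∈ S then !(x i) else x i

lemma dist_flip_self (S : Finset (Fin n)) (x : Fin n → Bool) :
    hammingDist x (flipS S x) = S.card := by
  rw [hamming_def]
  congr 1
  ext i
  by_cases h : i ∈ S <;> simp [flipS, h]

lemma dist_flip (S : Finset (Fin n)) (x y : Fin n → Bool) :
    hammingDist y (flipS S x) =
      (((Finset.univ.filter fun i => x i ≠ y i) \ S) ∪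
        (S \ (Finset.univ.filter fun i => x i ≠ y i))).card := by
  rw [hamming_def]
  congr 1
  ext i
  rw [Finset.mem_filter]
  by_cases h : i ∈ S <;>
    cases hx : x i <;> cases hy : y i <;>
      simp [flipS, h, hx, hy]

lemma exists_walk (t : ℕ) : ∀ x y : Fin n → Bool, hammingDist x y = t →
    ∃ p : (hypercube n).Walk x y, p.length = t := by
  induction t with
  | zero =>
    intro x y h
    rw [hammingDist_eq_zero] at h
    subst h
    exact ⟨Walk.nil, rfl⟩
  | succ t ih =>
    intro x y h
    have hne : (Finset.univ.filter fun i => x i ≠ y i).Nonempty := by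
      rw [← Finset.card_pos, ← hamming_def, h]; omega
    obtain ⟨i, hi⟩ := hne
    simp only [Finset.mem_filter] at hi
    set x' := Function.update x i (y i) with hx'
    have h1 : hammingDist x x' = 1 := by
      rw [hamming_def]
      have : (Finset.univ.filter fun j => x j ≠ x' j) = {i} := by
        ext j
        simp only [Finset.mem_filter, Finset.mem_univ, true_and, Finset.mem_singleton, hx']
        by_cases hj : j = i
        · subst hj; simp [hi.2]
        · simp [Function.update_of_ne hj, hj]
      rw [this, Finset.card_singleton]
    have h2 : hammingDist x' y = t := by
      have : (Finset.univ.filter fun j => x' j ≠ y j)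
          = (Finset.univ.filter fun j => x j ≠ y j).erase i := by
        ext j
        simp only [Finset.mem_filter, Finset.mem_univ, true_and, Finset.mem_erase, hx']
        by_cases hj : j = i
        · subst hj; simp
        · simp [Function.update_of_ne hj, hj]
      rw [hamming_def, this, Finset.card_erase_of_mem (by simp [hi.2]), ← hamming_def, h]
      omega
    obtain ⟨p, hp⟩ := ih x' y h2
    exact ⟨Walk.cons (hc_adj.2 h1) p, by simp [hp]⟩

lemma hamming_le_walk {x y : Fin n → Bool} (p : (hypercube n).Walk x y) :
    hammingDist x y ≤ p.length := by
  induction p with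
  | nil => simp
  | @cons a b c h p ih =>
    calc hammingDist a c ≤ hammingDist a b + hammingDist b c := hammingDist_triangle _ _ _
    _ ≤ 1 + p.length := by have := hc_adj.1 h; omega
    _ = (Walk.cons h p).length := by simp [Walk.length_cons]; omega

lemma dist_eq (x y : Fin n → Bool) : (hypercube n).dist x y = hammingDist x y := by
  obtain ⟨p, hp⟩ := exists_walk (hammingDist x y) x y rfl
  refine le_antisymm (le_trans (SimpleGraph.dist_le p) hp.le) ?_
  obtain ⟨q, hq⟩ := Reachable.exists_walk_length_eq_dist ⟨p⟩
  rw [← hq]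
  exact hamming_le_walk q

def wpar (x : Fin n → Bool) : ZMod 2 := ∑ i, if x i then 1 else 0

lemma hamming_par (x y : Fin n → Bool) :
    (hammingDist x y : ZMod 2) = wpar x + wpar y := by
  rw [hamming_def, Finset.natCast_card_filter, wpar, wpar, ← Finset.sum_add_distrib]
  refine Finset.sum_congr rfl fun i _ => ?_
  cases hx : x i <;> cases hy : y i <;> simp [hx, hy] <;> decide

lemma zc (a : ZMod 2) : a = 0 ∨ a = 1 := by revert a; decide

lemma neg_zmod2 (a : ZMod 2) : -a = a := by revert a; decide

end Infra
section Parity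
variable {n : ℕ}

lemma wpar_flip (hn : 1 ≤ n) (x : Fin n → Bool) :
    wpar (flipS {(⟨0, hn⟩ : Fin n)} x) = wpar x + 1 := by
  have h := hamming_par x (flipS {(⟨0, hn⟩ : Fin n)} x)
  rw [dist_flip_self, Finset.card_singleton] at h
  have := zc (wpar x)
  have := zc (wpar (flipS {(⟨0, hn⟩ : Fin n)} x))
  push_cast at h
  rcases this with h1 | h1 <;> rcases ‹wpar x = 0 ∨ wpar x = 1› with h2 | h2 <;>
    rw [h1, h2] at h ⊢ <;> first | rfl | (exfalso; revert h; decide)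

lemma flip_invol (S : Finset (Fin n)) (x : Fin n → Bool) : flipS S (flipS S x) = x := by
  funext i
  by_cases h : i ∈ S <;> simp [flipS, h]

lemma card_par (hn : 1 ≤ n) (c : ZMod 2) :
    (Finset.univ.filter fun x : Fin n → Bool => wpar x = c).card = 2 ^ (n - 1) := by
  have key : ∀ c : ZMod 2,
      (Finset.univ.filter fun x : Fin n → Bool => wpar x = c).card =
      (Finset.univ.filter fun x : Fin n → Bool => wpar x = c + 1).card := by
    intro c
    apply Finset.card_bij' (fun x _ => flipS {(⟨0, hn⟩ : Fin n)} x)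
      (fun x _ => flipS {(⟨0, hn⟩ : Fin n)} x)
    · intro a ha
      simp only [Finset.mem_filter, Finset.mem_univ, true_and] at ha ⊢
      rw [wpar_flip hn, ha]
    · intro a ha
      simp only [Finset.mem_filter, Finset.mem_univ, true_and] at ha ⊢
      rw [wpar_flip hn, ha]
      have := zc c; rcases this with h | h <;> rw [h] <;> decide
    · intro a _; exact flip_invol _ _
    · intro a _; exact flip_invol _ _
  have h01 : (Finset.univ.filter fun x : Fin n → Bool => wpar x = 0).card =
      (Finset.univ.filter fun x : Fin n → Bool => wpar x = 1).card := by
    simpa using key 0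
  have hsum : (Finset.univ.filter fun x : Fin n → Bool => wpar x = 0).card +
      (Finset.univ.filter fun x : Fin n → Bool => wpar x = 1).card = 2 ^ n := by
    have := Finset.card_filter_add_card_filter_not
      (s := (Finset.univ : Finset (Fin n → Bool))) (p := fun x => wpar x = 0)
    have heq : (Finset.univ.filter fun x : Fin n → Bool => ¬ wpar x = 0) =
        (Finset.univ.filter fun x : Fin n → Bool => wpar x = 1) := by
      apply Finset.filter_congr
      intro x _
      rcases zc (wpar x) with h | h <;> simp [h]
    rw [heq] at this
    rw [this]
    simp [Fintype.card_fun]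
  have hpow : 2 ^ n = 2 ^ (n - 1) + 2 ^ (n - 1) := by
    have h := pow_succ 2 (n - 1)
    have he : n - 1 + 1 = n := by omega
    rw [he] at h; omega
  rcases zc c with h | h <;> subst h <;> omega

lemma lower_bound (hn : 1 ≤ n) (D : Finset (Fin n → Bool))
    (hD : IsDistEqSet (hypercube n) (D : Set (Fin n → Bool))) :
    2 ^ (n - 1) ≤ D.card := by
  have hcard : Dᶜ.card ≤ 2 ^ (n - 1) := by
    rcases Dᶜ.eq_empty_or_nonempty with he | ⟨x0, hx0⟩
    · rw [he]; simp
    · have hsub : Dᶜ ⊆ Finset.univ.filter fun x => wpar x = wpar x0 := by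
        intro x hx
        simp only [Finset.mem_compl] at hx hx0
        obtain ⟨w, hw, hdist⟩ := hD x (by simpa using hx) x0 (by simpa using hx0)
        rw [dist_eq, dist_eq] at hdist
        have h1 := hamming_par x w
        have h2 := hamming_par x0 w
        rw [hdist, h2] at h1
        simp only [Finset.mem_filter, Finset.mem_univ, true_and]
        exact add_right_cancel h1.symm
      calc Dᶜ.card ≤ _ := Finset.card_le_card hsub
        _ = 2 ^ (n - 1) := card_par hn _
  have h2 : Dᶜ.card = 2 ^ n - D.card := by
    rw [Finset.card_compl]; simp [Fintype.card_fun]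
  have h3 : D.card ≤ 2 ^ n := by
    simpa [Fintype.card_fun] using Finset.card_le_univ D
  have hpow : 2 ^ n = 2 ^ (n - 1) + 2 ^ (n - 1) := by
    have h := pow_succ 2 (n - 1)
    have he : n - 1 + 1 = n := by omega
    rw [he] at h; omega
  omega

end Parity
section Witness
variable {n : ℕ}

lemma hamming_even {x y : Fin n → Bool} (hx : wpar x = 0) (hy : wpar y = 0) :
    2 ∣ hammingDist x y := by
  have h := hamming_par x y
  rw [hx, hy, add_zero] at h
  exact (ZMod.natCast_eq_zero_iff _ 2).1 h

lemma odd_witness {x y : Fin n → Bool} (hx : wpar x = 0) (hy : wpar y = 0)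
    (hne : x ≠ y) (hlt : hammingDist x y < n) :
    ∃ w : Fin n → Bool, wpar w = 1 ∧ hammingDist x w = hammingDist y w := by
  set Dxy := Finset.univ.filter fun i => x i ≠ y i with hDxy
  set t := hammingDist x y with ht
  have htc : Dxy.card = t := (hamming_def x y).symm
  have hte : 2 ∣ t := hamming_even hx hy
  have ht0 : t ≠ 0 := fun h => hne (hammingDist_eq_zero.1 h)
  set k := t / 2 with hk
  set ε := if k % 2 = 0 then 1 else 0 with hε
  obtain ⟨S0, hS0sub, hS0card⟩ := Finset.exists_subset_card_eq
    (s := Dxy) (n := k) (by omega)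
  obtain ⟨S1, hS1sub, hS1card⟩ := Finset.exists_subset_card_eq
    (s := Dxyᶜ) (n := ε) (by
      rw [Finset.card_compl, Fintype.card_fin, htc]
      have : ε ≤ 1 := by rw [hε]; split <;> omega
      omega)
  have hdisj : Disjoint S0 S1 :=
    Finset.disjoint_left.2 fun a ha ha1 => (Finset.mem_compl.1 (hS1sub ha1)) (hS0sub ha)
  set S := S0 ∪ S1 with hS
  set w := flipS S x with hw
  have hxw : hammingDist x w = k + ε := by
    rw [hw, dist_flip_self, hS, Finset.card_union_of_disjoint hdisj, hS0card, hS1card]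
  have hyw : hammingDist y w = (t - k) + ε := by
    rw [hw, dist_flip]
    have h1 : (Finset.univ.filter fun i => x i ≠ y i) \ S = Dxy \ S0 := by
      rw [← hDxy, hS]
      ext i
      simp only [Finset.mem_sdiff, Finset.mem_union]
      constructor
      · rintro ⟨h, h2⟩; exact ⟨h, fun h3 => h2 (Or.inl h3)⟩
      · rintro ⟨h, h2⟩
        refine ⟨h, ?_⟩
        rintro (h3 | h3)
        · exact h2 h3
        · exact (Finset.mem_compl.1 (hS1sub h3)) h
    have h2 : S \ (Finset.univ.filter fun i => x i ≠ y i) = S1 := by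
      rw [← hDxy, hS]
      ext i
      simp only [Finset.mem_sdiff, Finset.mem_union]
      constructor
      · rintro ⟨h | h, h2⟩
        · exact absurd (hS0sub h) h2
        · exact h
      · intro h
        exact ⟨Or.inr h, Finset.mem_compl.1 (hS1sub h)⟩
    rw [h1, h2, Finset.card_union_of_disjoint, Finset.card_sdiff_of_subset hS0sub, htc, hS0card, hS1card]
    exact Finset.disjoint_left.2 fun a ha ha1 =>
      (Finset.mem_compl.1 (hS1sub ha1)) (Finset.mem_sdiff.1 ha).1
  have hodd : (k + ε) % 2 = 1 := by
    rw [hε]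
    by_cases h : k % 2 = 0 <;> simp [h] <;> omega
  refine ⟨w, ?_, ?_⟩
  · have h := hamming_par x w
    rw [hx, hxw, zero_add] at h
    rw [← h, ← ZMod.natCast_mod, hodd]
    rfl
  · rw [hxw, hyw]; omega

lemma choose_subset {α : Type*} [DecidableEq α] {T Fi Fo : Finset α}
    (hFi : Fi ⊆ T) (hd : Disjoint Fi Fo) {s : ℕ}
    (h1 : Fi.card ≤ s) (h2 : s + Fo.card ≤ T.card) :
    ∃ S, S ⊆ T ∧ S.card = s ∧ Fi ⊆ S ∧ Disjoint S Fo := by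
  have hT' : s - Fi.card ≤ (T \ (Fi ∪ Fo)).card := by
    have := Finset.le_card_sdiff (Fi ∪ Fo) T
    have := Finset.card_union_le Fi Fo
    omega
  obtain ⟨S', hS'sub, hS'card⟩ := Finset.exists_subset_card_eq hT'
  have hd2 : Disjoint Fi S' := Finset.disjoint_left.2 fun a ha ha' =>
    (Finset.mem_sdiff.1 (hS'sub ha')).2 (Finset.mem_union_left _ ha)
  refine ⟨Fi ∪ S', Finset.union_subset hFi
    (hS'sub.trans (Finset.sdiff_subset)), ?_, Finset.subset_union_left, ?_⟩
  · rw [Finset.card_union_of_disjoint hd2, hS'card]; omega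
  · refine Finset.disjoint_left.2 ?_
    rintro a ha hao
    rcases Finset.mem_union.1 ha with h | h
    · exact Finset.disjoint_left.1 hd h hao
    · exact (Finset.mem_sdiff.1 (hS'sub h)).2 (Finset.mem_union_right _ hao)

lemma anti_forall {x y : Fin n → Bool} (h : hammingDist x y = n) : ∀ i, x i ≠ y i := by
  have : (Finset.univ.filter fun i => x i ≠ y i) = Finset.univ := by
    apply Finset.eq_univ_of_card
    rw [← hamming_def, h, Fintype.card_fin]
  intro i
  have hm : i ∈ Finset.univ.filter fun i => x i ≠ y i := by
    rw [this]; exact Finset.mem_univ i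
  exact (Finset.mem_filter.1 hm).2

lemma anti_sum {x y w : Fin n → Bool} (h : ∀ i, x i ≠ y i) :
    hammingDist x w + hammingDist y w = n := by
  rw [hamming_def, hamming_def]
  have : (Finset.univ.filter fun i => y i ≠ w i) =
      (Finset.univ.filter fun i => x i ≠ w i)ᶜ := by
    ext i
    have := h i
    simp only [Finset.mem_filter, Finset.mem_univ, true_and, Finset.mem_compl]
    cases hx : x i <;> cases hy : y i <;> cases hw : w i <;> simp_all
  rw [this, Finset.card_add_card_compl, Fintype.card_fin]

end Witness
section Blocks
variable {m : ℕ}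

def dbl (b : Fin m → Bool) : Fin (m + m) → Bool := Fin.addCases b b

def adbl (b : Fin m → Bool) : Fin (m + m) → Bool := Fin.addCases b (fun j => !(b j))

def xL (x : Fin (m + m) → Bool) : Fin m → Bool := fun j => x (Fin.castAdd m j)

def xR (x : Fin (m + m) → Bool) : Fin m → Bool := fun j => x (Fin.natAdd m j)

lemma dist_addCases (x : Fin (m + m) → Bool) (a c : Fin m → Bool) :
    hammingDist x (Fin.addCases a c) = hammingDist (xL x) a + hammingDist (xR x) c := by
  rw [hamming_def, hamming_def, hamming_def, Finset.card_filter, Finset.card_filter,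
    Finset.card_filter, Fin.sum_univ_add]
  congr 1
  · exact Finset.sum_congr rfl fun j _ => by rw [Fin.addCases_left]; rfl
  · exact Finset.sum_congr rfl fun j _ => by rw [Fin.addCases_right]; rfl

lemma sum_dist (u v b : Fin m → Bool) :
    hammingDist u b + hammingDist v b
      = (Finset.univ.filter fun j => u j ≠ v j).card
        + 2 * (Finset.univ.filter fun j => u j = v j ∧ u j ≠ b j).card := by
  rw [hamming_def, hamming_def, Finset.card_filter, Finset.card_filter, Finset.card_filter,
    Finset.card_filter, ← Finset.sum_add_distrib, Finset.mul_sum, ← Finset.sum_add_distrib]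
  refine Finset.sum_congr rfl fun j _ => ?_
  cases hu : u j <;> cases hv : v j <;> cases hb : b j <;> simp [hu, hv, hb]

lemma sum_dist' (u v b : Fin m → Bool) :
    hammingDist u b + hammingDist v (fun j => !(b j))
      = (Finset.univ.filter fun j => u j = v j).card
        + 2 * (Finset.univ.filter fun j => u j ≠ v j ∧ u j ≠ b j).card := by
  rw [hamming_def, hamming_def, Finset.card_filter, Finset.card_filter, Finset.card_filter,
    Finset.card_filter, ← Finset.sum_add_distrib, Finset.mul_sum, ← Finset.sum_add_distrib]
  refine Finset.sum_congr rfl fun j _ => ?_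
  cases hu : u j <;> cases hv : v j <;> cases hb : b j <;> simp [hu, hv, hb]

def C3 (m : ℕ) (hm : 3 ≤ m) : Finset (Fin m) :=
  {⟨0, by omega⟩, ⟨1, by omega⟩, ⟨2, by omega⟩}

lemma C3_card (hm : 3 ≤ m) : (C3 m hm).card = 3 := by
  rw [C3]
  rw [Finset.card_insert_of_notMem (by simp), Finset.card_insert_of_notMem (by simp),
    Finset.card_singleton]

lemma nc_even (x : Fin (m + m) → Bool) (hx : wpar x = 0) :
    2 ∣ (Finset.univ.filter fun j => xL x j ≠ xR x j).card := by
  have h : ((Finset.univ.filter fun j => xL x j ≠ xR x j).card : ZMod 2) = wpar x := by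
    rw [Finset.natCast_card_filter, wpar, Fin.sum_univ_add]
    rw [← Finset.sum_add_distrib]
    refine Finset.sum_congr rfl fun j _ => ?_
    cases hu : xL x j <;> cases hv : xR x j <;> simp [xL, xR] at hu hv <;>
      simp [hu, hv] <;> decide
  rw [hx] at h
  exact (ZMod.natCast_eq_zero_iff _ 2).1 h

lemma block_witness (hm : 3 ≤ m) (hme : 2 ∣ m) (x : Fin (m + m) → Bool) (hx : wpar x = 0) :
    ∃ b : Fin m → Bool, (∀ j ∈ C3 m hm, b j = false) ∧
      (hammingDist x (dbl b) = m ∨ hammingDist x (adbl b) = m) := by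
  classical
  set NC := Finset.univ.filter fun j => xL x j ≠ xR x j with hNC
  set Cn := Finset.univ.filter fun j => xL x j = xR x j with hCn
  have hAB : Cn.card + NC.card = m := by
    rw [hCn, hNC]
    have := Finset.card_filter_add_card_filter_not
      (s := (Finset.univ : Finset (Fin m))) (p := fun j => xL x j = xR x j)
    simpa using this
  have hA2 : 2 ∣ NC.card := nc_even x hx
  have hB2 : 2 ∣ Cn.card := by omega
  set r := NC.card / 2 with hr
  set s := Cn.card / 2 with hs
  set Fi1 := (C3 m hm ∩ Cn).filter (fun j => xL x j = true) with hFi1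
  set Fo1 := (C3 m hm ∩ Cn).filter (fun j => xL x j = false) with hFo1
  set Fi2 := (C3 m hm ∩ NC).filter (fun j => xL x j = true) with hFi2
  set Fo2 := (C3 m hm ∩ NC).filter (fun j => xL x j = false) with hFo2
  have hc1 : Fi1.card + Fo1.card = (C3 m hm ∩ Cn).card := by
    rw [hFi1, hFo1]
    have h := Finset.card_filter_add_card_filter_not
      (s := C3 m hm ∩ Cn) (p := fun j => xL x j = true)
    have heq : Finset.filter (fun j => xL x j = false) (C3 m hm ∩ Cn)
        = Finset.filter (fun a => ¬ xL x a = true) (C3 m hm ∩ Cn) :=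
      Finset.filter_congr fun j _ => by cases xL x j <;> simp
    rw [heq]; exact h
  have hc2 : Fi2.card + Fo2.card = (C3 m hm ∩ NC).card := by
    rw [hFi2, hFo2]
    have h := Finset.card_filter_add_card_filter_not
      (s := C3 m hm ∩ NC) (p := fun j => xL x j = true)
    have heq : Finset.filter (fun j => xL x j = false) (C3 m hm ∩ NC)
        = Finset.filter (fun a => ¬ xL x a = true) (C3 m hm ∩ NC) :=
      Finset.filter_congr fun j _ => by cases xL x j <;> simp
    rw [heq]; exact h
  have hcsum : (C3 m hm ∩ Cn).card + (C3 m hm ∩ NC).card = 3 := by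
    rw [← C3_card hm]
    rw [← Finset.card_union_of_disjoint]
    · congr 1
      rw [← Finset.inter_union_distrib_left]
      have : Cn ∪ NC = Finset.univ := by
        rw [hCn, hNC]
        ext j
        simp only [Finset.mem_union, Finset.mem_filter, Finset.mem_univ, true_and]
        tauto
      rw [this, Finset.inter_univ]
    · refine Finset.disjoint_left.2 fun a ha ha' => ?_
      have h1 := (Finset.mem_inter.1 ha).2
      have h2 := (Finset.mem_inter.1 ha').2
      rw [hCn] at h1; rw [hNC] at h2
      exact (Finset.mem_filter.1 h2).2 (Finset.mem_filter.1 h1).2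
  by_cases hT1 : Fi1.card ≤ s ∧ Fo1.card ≤ s
  · -- type 1 : dbl
    obtain ⟨S, hSsub, hScard, hSFi, hSFo⟩ := choose_subset
      (Fi := Fi1) (Fo := Fo1) (T := Cn)
      (by rw [hFi1]; exact (Finset.filter_subset _ _).trans Finset.inter_subset_right)
      (by
        refine Finset.disjoint_left.2 fun a ha ha' => ?_
        have := (Finset.mem_filter.1 ha).2
        have := (Finset.mem_filter.1 ha').2
        simp_all)
      hT1.1 (by omega)
    set b : Fin m → Bool := fun j =>
      if j ∈ S then !(xL x j) else if xL x j = xR x j then xL x j else false with hb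
    refine ⟨b, ?_, Or.inl ?_⟩
    · intro j hj
      rw [hb]
      by_cases hjS : j ∈ S
      · simp only [hjS, if_true]
        have hjCn : j ∈ Cn := hSsub hjS
        have : j ∈ Fi1 := by
          rw [hFi1]
          by_contra hno
          have hxl : xL x j = false := by
            rcases Bool.eq_false_or_eq_true (xL x j) with h | h
            · exact absurd (Finset.mem_filter.2 ⟨Finset.mem_inter.2 ⟨hj, hjCn⟩, h⟩) hno
            · exact h
          exact Finset.disjoint_left.1 hSFo hjS
            (Finset.mem_filter.2 ⟨Finset.mem_inter.2 ⟨hj, hjCn⟩, hxl⟩)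
        have := (Finset.mem_filter.1 this).2
        rw [this]; rfl
      · simp only [hjS, if_false]
        by_cases hc : xL x j = xR x j
        · have hjCn : j ∈ Cn := by rw [hCn]; simp [hc]
          have : j ∉ Fi1 := fun hin => hjS (hSFi hin)
          have hxl : xL x j = false := by
            rcases Bool.eq_false_or_eq_true (xL x j) with h | h
            · exact absurd (Finset.mem_filter.2 ⟨Finset.mem_inter.2 ⟨hj, hjCn⟩, h⟩) this
            · exact h
          rw [if_pos hc]; exact hxl
        · simp [hc]
    · rw [show dbl b = Fin.addCases b b from rfl, dist_addCases, sum_dist]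
      have hfe : (Finset.univ.filter fun j => xL x j = xR x j ∧ xL x j ≠ b j) = S := by
        ext j
        simp only [Finset.mem_filter, Finset.mem_univ, true_and]
        constructor
        · rintro ⟨hc, hne⟩
          rw [hb] at hne
          by_cases hjS : j ∈ S
          · exact hjS
          · simp [hjS, hc] at hne
        · intro hjS
          have hjCn := hSsub hjS
          rw [hCn] at hjCn
          have hc := (Finset.mem_filter.1 hjCn).2
          refine ⟨hc, ?_⟩
          rw [hb]
          simp only [hjS, if_true]
          cases xL x j <;> simp
      rw [hfe, hScard, ← hNC]
      omega
  · by_cases hT2 : Fi2.card ≤ r ∧ Fo2.card ≤ r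
    · -- type 2 : adbl
      obtain ⟨S, hSsub, hScard, hSFi, hSFo⟩ := choose_subset
        (Fi := Fi2) (Fo := Fo2) (T := NC)
        (by rw [hFi2]; exact (Finset.filter_subset _ _).trans Finset.inter_subset_right)
        (by
          refine Finset.disjoint_left.2 fun a ha ha' => ?_
          have := (Finset.mem_filter.1 ha).2
          have := (Finset.mem_filter.1 ha').2
          simp_all)
        hT2.1 (by omega)
      set b : Fin m → Bool := fun j =>
        if j ∈ S then !(xL x j) else if xL x j = xR x j then false else xL x j with hb
      refine ⟨b, ?_, Or.inr ?_⟩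
      · intro j hj
        rw [hb]
        by_cases hjS : j ∈ S
        · simp only [hjS, if_true]
          have hjNC : j ∈ NC := hSsub hjS
          have : j ∈ Fi2 := by
            rw [hFi2]
            by_contra hno
            have hxl : xL x j = false := by
              rcases Bool.eq_false_or_eq_true (xL x j) with h | h
              · exact absurd (Finset.mem_filter.2 ⟨Finset.mem_inter.2 ⟨hj, hjNC⟩, h⟩) hno
              · exact h
            exact Finset.disjoint_left.1 hSFo hjS
              (Finset.mem_filter.2 ⟨Finset.mem_inter.2 ⟨hj, hjNC⟩, hxl⟩)
          have := (Finset.mem_filter.1 this).2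
          rw [this]; rfl
        · simp only [hjS, if_false]
          by_cases hc : xL x j = xR x j
          · rw [if_pos hc]
          · have hjNC : j ∈ NC := by rw [hNC]; simp [hc]
            have : j ∉ Fi2 := fun hin => hjS (hSFi hin)
            have hxl : xL x j = false := by
              rcases Bool.eq_false_or_eq_true (xL x j) with h | h
              · exact absurd (Finset.mem_filter.2 ⟨Finset.mem_inter.2 ⟨hj, hjNC⟩, h⟩) this
              · exact h
            rw [if_neg hc]; exact hxl
      · rw [show adbl b = Fin.addCases b (fun j => !(b j)) from rfl, dist_addCases, sum_dist']
        have hfe : (Finset.univ.filter fun j => xL x j ≠ xR x j ∧ xL x j ≠ b j) = S := by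
          ext j
          simp only [Finset.mem_filter, Finset.mem_univ, true_and]
          constructor
          · rintro ⟨hc, hne⟩
            rw [hb] at hne
            by_cases hjS : j ∈ S
            · exact hjS
            · simp [hjS, hc] at hne
          · intro hjS
            have hjNC := hSsub hjS
            rw [hNC] at hjNC
            have hc := (Finset.mem_filter.1 hjNC).2
            refine ⟨hc, ?_⟩
            rw [hb]
            simp only [hjS, if_true]
            cases xL x j <;> simp
        rw [hfe, hScard, ← hCn]
        omega
    · exfalso
      have h1 : s + 1 ≤ (C3 m hm ∩ Cn).card := by
        rcases Nat.lt_or_ge s Fi1.card with h | h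
        · omega
        · have : Fo1.card > s := by
            rcases Nat.lt_or_ge s Fo1.card with h' | h'
            · exact h'
            · exact absurd ⟨h, h'⟩ hT1
          omega
      have h2 : r + 1 ≤ (C3 m hm ∩ NC).card := by
        rcases Nat.lt_or_ge r Fi2.card with h | h
        · omega
        · have : Fo2.card > r := by
            rcases Nat.lt_or_ge r Fo2.card with h' | h'
            · exact h'
            · exact absurd ⟨h, h'⟩ hT2
          omega
      omega

end Blocks
section Upper
variable {m : ℕ}

lemma upper_big (hm : 3 ≤ m) (hme : 2 ∣ m) :
    ∃ D : Finset (Fin (m + m) → Bool),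
      IsDistEqSet (hypercube (m + m)) (D : Set (Fin (m + m) → Bool)) ∧
      D.card ≤ 2 ^ (m + m - 1) + 2 ^ (m - 2) := by
  classical
  have hn1 : 1 ≤ m + m := by omega
  set Podd := Finset.univ.filter fun x : Fin (m + m) → Bool => wpar x = 1 with hPodd
  set A1F := Finset.univ.filter
    (fun b : Fin m → Bool => ∀ j ∈ C3 m hm, b j = false) with hA1F
  set E1 := A1F.image dbl with hE1
  set E2 := A1F.image adbl with hE2
  set D := Podd ∪ E1 ∪ E2 with hD
  have hPoddD : Podd ⊆ D := by
    rw [hD]; exact Finset.subset_union_left.trans Finset.subset_union_left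
  refine ⟨D, ?_, ?_⟩
  · intro x hx y hy
    have hx0 : wpar x = 0 := by
      rcases zc (wpar x) with h | h
      · exact h
      · exfalso
        exact hx (Finset.mem_coe.2 (hPoddD (Finset.mem_filter.2 ⟨Finset.mem_univ _, h⟩)))
    have hy0 : wpar y = 0 := by
      rcases zc (wpar y) with h | h
      · exact h
      · exfalso
        exact hy (Finset.mem_coe.2 (hPoddD (Finset.mem_filter.2 ⟨Finset.mem_univ _, h⟩)))
    by_cases hxy : x = y
    · subst hxy
      set w0 := flipS {(⟨0, hn1⟩ : Fin (m + m))} (fun _ => false) with hw0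
      have hwp : wpar w0 = 1 := by
        rw [hw0, wpar_flip hn1]
        have : wpar (fun _ : Fin (m + m) => false) = 0 := by simp [wpar]
        rw [this, zero_add]
      exact ⟨w0, Finset.mem_coe.2 (hPoddD (Finset.mem_filter.2 ⟨Finset.mem_univ _, hwp⟩)), rfl⟩
    · have htle : hammingDist x y ≤ m + m := by
        have := hammingDist_le_card_fintype (x := x) (y := y)
        simpa using this
      rcases Nat.lt_or_ge (hammingDist x y) (m + m) with hlt | hge
      · obtain ⟨w, hw1, hw2⟩ := odd_witness hx0 hy0 hxy hlt
        refine ⟨w, Finset.mem_coe.2 (hPoddD (Finset.mem_filter.2 ⟨Finset.mem_univ _, hw1⟩)), ?_⟩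
        rw [dist_eq, dist_eq]; exact hw2
      · have heq : hammingDist x y = m + m := le_antisymm htle hge
        have hanti := anti_forall heq
        obtain ⟨b, hbC, hcase⟩ := block_witness hm hme x hx0
        rcases hcase with hdb | hdb
        · refine ⟨dbl b, ?_, ?_⟩
          · refine Finset.mem_coe.2 ?_
            rw [hD]
            refine Finset.mem_union_left _ (Finset.mem_union_right _ ?_)
            exact Finset.mem_image.2 ⟨b, Finset.mem_filter.2 ⟨Finset.mem_univ _, hbC⟩, rfl⟩
          · have hsum := anti_sum (w := dbl b) hanti
            rw [dist_eq, dist_eq, hdb]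
            omega
        · refine ⟨adbl b, ?_, ?_⟩
          · refine Finset.mem_coe.2 ?_
            rw [hD]
            refine Finset.mem_union_right _ ?_
            exact Finset.mem_image.2 ⟨b, Finset.mem_filter.2 ⟨Finset.mem_univ _, hbC⟩, rfl⟩
          · have hsum := anti_sum (w := adbl b) hanti
            rw [dist_eq, dist_eq, hdb]
            omega
  · have hP : Podd.card = 2 ^ (m + m - 1) := card_par hn1 1
    have hA : A1F.card ≤ 2 ^ (m - 3) := by
      have hinj := Finset.card_le_card_of_injOn
        (f := fun b (j : ((C3 m hm)ᶜ : Finset (Fin m))) => b j.1)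
        (s := A1F) (t := (Finset.univ : Finset (((C3 m hm)ᶜ : Finset (Fin m)) → Bool)))
        (fun _ _ => Finset.mem_univ _)
        (by
          intro b1 hb1 b2 hb2 heq
          funext j
          by_cases hj : j ∈ C3 m hm
          · rw [hA1F] at hb1 hb2
            simp only [Finset.mem_coe, Finset.mem_filter] at hb1 hb2
            rw [hb1.2 j hj, hb2.2 j hj]
          · exact congrFun heq ⟨j, Finset.mem_compl.2 hj⟩)
      calc A1F.card ≤ _ := hinj
        _ = 2 ^ (m - 3) := by
          rw [Finset.card_univ, Fintype.card_fun, Fintype.card_coe, Finset.card_compl,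
            C3_card hm, Fintype.card_fin]
          simp
    have hcard : D.card ≤ Podd.card + A1F.card + A1F.card := by
      calc D.card ≤ (Podd ∪ E1).card + E2.card := Finset.card_union_le _ _
        _ ≤ Podd.card + E1.card + E2.card := by
            have := Finset.card_union_le Podd E1
            omega
        _ ≤ Podd.card + A1F.card + A1F.card := by
            have h1 := Finset.card_image_le (f := dbl) (s := A1F)
            have h2 := Finset.card_image_le (f := adbl) (s := A1F)
            rw [hE1, hE2]
            omega
    have hpow : 2 ^ (m - 2) = 2 ^ (m - 3) + 2 ^ (m - 3) := by
      have h := pow_succ 2 (m - 3)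
      have he : m - 3 + 1 = m - 2 := by omega
      rw [he] at h; omega
    omega

lemma upper_small :
    ∃ D : Finset (Fin (2 + 2) → Bool),
      IsDistEqSet (hypercube (2 + 2)) (D : Set (Fin (2 + 2) → Bool)) ∧
      D.card ≤ 2 ^ 3 + 1 := by
  classical
  have hn1 : 1 ≤ 2 + 2 := by omega
  set z : Fin (2 + 2) → Bool := fun _ => false with hz
  have hzp : wpar z = 0 := by simp [wpar, hz]
  set Podd := Finset.univ.filter fun x : Fin (2 + 2) → Bool => wpar x = 1 with hPodd
  set D := Podd ∪ {z} with hD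
  have hzD : z ∈ D := by rw [hD]; exact Finset.mem_union_right _ (Finset.mem_singleton_self z)
  refine ⟨D, ?_, ?_⟩
  · intro x hx y hy
    have hx0 : wpar x = 0 := by
      rcases zc (wpar x) with h | h
      · exact h
      · exfalso
        apply hx
        exact Finset.mem_coe.2 (Finset.mem_union_left _
          (Finset.mem_filter.2 ⟨Finset.mem_univ x, h⟩))
    have hy0 : wpar y = 0 := by
      rcases zc (wpar y) with h | h
      · exact h
      · exfalso
        apply hy
        exact Finset.mem_coe.2 (Finset.mem_union_left _
          (Finset.mem_filter.2 ⟨Finset.mem_univ y, h⟩))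
    have hxz : x ≠ z := fun h => hx (Finset.mem_coe.2 (h ▸ hzD))
    have hyz : y ≠ z := fun h => hy (Finset.mem_coe.2 (h ▸ hzD))
    by_cases hxy : x = y
    · exact ⟨z, Finset.mem_coe.2 hzD, by rw [hxy]⟩
    · rcases Nat.lt_or_ge (hammingDist x y) (2 + 2) with hlt | hge
      · obtain ⟨w, hw1, hw2⟩ := odd_witness hx0 hy0 hxy hlt
        refine ⟨w, Finset.mem_coe.2 (Finset.mem_union_left _
          (Finset.mem_filter.2 ⟨Finset.mem_univ _, hw1⟩)), ?_⟩
        rw [dist_eq, dist_eq]; exact hw2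
      · have htle : hammingDist x y ≤ 2 + 2 := by
          have := hammingDist_le_card_fintype (x := x) (y := y)
          simpa using this
        have heq : hammingDist x y = 2 + 2 := le_antisymm htle hge
        have hanti := anti_forall heq
        have ha2 : 2 ∣ hammingDist x z := hamming_even hx0 hzp
        have hale : hammingDist x z ≤ 2 + 2 := by
          have := hammingDist_le_card_fintype (x := x) (y := z)
          simpa using this
        have ha0 : hammingDist x z ≠ 0 := fun h => hxz (hammingDist_eq_zero.1 h)
        have ha4 : hammingDist x z ≠ 2 + 2 := by
          intro h
          apply hyz
          funext i
          have h1 := anti_forall h i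
          have h2 := hanti i
          cases hxi : x i <;> cases hyi : y i <;> simp_all [hz]
        have hsum := anti_sum (w := z) hanti
        refine ⟨z, Finset.mem_coe.2 hzD, ?_⟩
        rw [dist_eq, dist_eq]
        omega
  · have hP : Podd.card = 2 ^ (2 + 2 - 1) := card_par hn1 1
    calc D.card ≤ Podd.card + ({z} : Finset _).card := Finset.card_union_le _ _
      _ ≤ 2 ^ 3 + 1 := by rw [hP, Finset.card_singleton]
end Upper

theorem stmt_8 (n : ℕ) (hn : 4 ≤ n) (h4 : n % 4 = 0) :
    2 ^ (n - 1) ≤ eqdim (hypercube n) ∧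
      eqdim (hypercube n) ≤ 2 ^ (n - 1) + 2 ^ (n / 2 - 2) := by
  obtain ⟨m, rfl⟩ : ∃ m, n = m + m := ⟨n / 2, by omega⟩
  constructor
  · apply le_csInf
    · refine ⟨(Finset.univ : Finset (Fin (m + m) → Bool)).card, Finset.univ, ?_, rfl⟩
      intro x hx
      simp at hx
    · rintro k ⟨D, hD, rfl⟩
      exact lower_bound (by omega) D hD
  · have hm2 : 2 ∣ m := by omega
    have hdiv : (m + m) / 2 = m := by omega
    by_cases hm3 : 3 ≤ m
    · obtain ⟨D, hD, hc⟩ := upper_big hm3 hm2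
      have h1 : eqdim (hypercube (m + m)) ≤ D.card := Nat.sInf_le ⟨D, hD, rfl⟩
      rw [hdiv]
      omega
    · have hm : m = 2 := by omega
      subst hm
      obtain ⟨D, hD, hc⟩ := upper_small
      have h1 : eqdim (hypercube (2 + 2)) ≤ D.card := Nat.sInf_le ⟨D, hD, rfl⟩
      norm_num at hc ⊢
      omega
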